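/- Let g be the left maximal solution of g'(z) = z⁻²(1 − 1/g(z)) − (3/4)g(z)/z with g(z₀) = g₀ > 0 (z₀ > 0), defined and positive on (0, z₀] with g → 1 at 0. Then for every n ∈ ℕ, g(z) = Σ_{k=0}^n α_k z^k + o(z^n) as z → 0⁺, where α₀ = 1 and α_{k+1} = (k/2 + 3/4) Σ_{j=0}^k α_j α_{k−j}. -/

import Mathlib

open Set Filter Finset Asymptotics

private lemma cross_pos' (f : ℝ → ℝ) (a b : ℝ) (hab : a ≤ b)
    (hcont : ContinuousOn f (Icc a b))
    (hderiv : ∀ z ∈ Icc a b, 0 < f z → ∃ d, HasDerivAt f d z ∧ 0 < d)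
    (ha : 0 < f a) : 0 < f b := by
  by_contra hb
  push_neg at hb
  set T : Set ℝ := {z ∈ Icc a b | f z ≤ 0} with hT
  have hTne : T.Nonempty := ⟨b, ⟨⟨hab, le_refl b⟩, hb⟩⟩
  have hTclosed : IsClosed T := by
    have : T = Icc a b ∩ f ⁻¹' (Iic 0) := by
      ext z; simp [hT]
    rw [this]
    exact ContinuousOn.preimage_isClosed_of_isClosed hcont isClosed_Icc isClosed_Iic
  have hTbdd : BddBelow T := ⟨a, fun z hz => hz.1.1⟩
  set s := sInf T with hs
  have hsT : s ∈ T := hTclosed.csInf_mem hTne hTbdd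
  have hsa : a ≤ s := hsT.1.1
  have hsb : s ≤ b := hsT.1.2
  have hfs : f s ≤ 0 := hsT.2
  have has : a < s := by
    rcases lt_or_eq_of_le hsa with h | h
    · exact h
    · exfalso; rw [← h] at hfs; linarith
  have hpos : ∀ z ∈ Ico a s, 0 < f z := by
    intro z hz
    by_contra hzf
    push_neg at hzf
    have : z ∈ T := ⟨⟨hz.1, le_trans hz.2.le hsb⟩, hzf⟩
    exact absurd (csInf_le hTbdd this) (not_le.mpr hz.2)
  have hmono : StrictMonoOn f (Icc a s) := by
    apply strictMonoOn_of_deriv_pos (convex_Icc a s)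
      (hcont.mono (Icc_subset_Icc le_rfl hsb))
    intro x hx
    rw [interior_Icc] at hx
    obtain ⟨d, hd, hdpos⟩ := hderiv x ⟨hx.1.le, le_trans hx.2.le hsb⟩
      (hpos x ⟨hx.1.le, hx.2⟩)
    rw [hd.deriv]; exact hdpos
  have := hmono ⟨le_rfl, hsa⟩ ⟨hsa, le_rfl⟩ has
  linarith

private lemma barrier' (δ C M : ℝ) (n : ℕ) (f r : ℝ → ℝ)
    (hC : 0 ≤ C)
    (hδn : δ * (n + 1) ≤ 1 / 8)
    (hf : ∀ z ∈ Ioc (0:ℝ) δ, ∃ a : ℝ, 1 / (4 * z ^ 2) ≤ a ∧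
        HasDerivAt f (a * f z + r z) z)
    (hr : ∀ z ∈ Ioc (0:ℝ) δ, |r z| ≤ C * z ^ (n + 1) / z ^ 2)
    (hM1 : 8 * C + 1 ≤ M)
    (hM2 : f δ + 1 ≤ M * δ ^ (n + 1)) :
    ∀ z ∈ Ioc (0:ℝ) δ, f z ≤ M * z ^ (n + 1) := by
  intro w hw
  by_contra hcon
  push_neg at hcon
  set D : ℝ → ℝ := fun z => f z - M * z ^ (n + 1) with hD
  have hIcc : Icc w δ ⊆ Ioc (0:ℝ) δ := fun z hz => ⟨lt_of_lt_of_le hw.1 hz.1, hz.2⟩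
  have hDδ : 0 < D δ := by
    apply cross_pos' D w δ hw.2
    · intro z hz
      obtain ⟨a, _, hfd⟩ := hf z (hIcc hz)
      exact ((hfd.sub ((hasDerivAt_pow (n+1) z).const_mul M)).continuousAt).continuousWithinAt
    · intro z hz hDz
      obtain ⟨a, haz, hfd⟩ := hf z (hIcc hz)
      have hz' := hIcc hz
      have hz0 : 0 < z := hz'.1
      refine ⟨a * f z + r z - M * (↑(n + 1) * z ^ (n + 1 - 1)),
        (hfd.sub ((hasDerivAt_pow (n+1) z).const_mul M)), ?_⟩
      have hfz : M * z ^ (n + 1) ≤ f z := by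
        simp only [hD] at hDz; linarith
      have hMpos : 0 < M := by linarith
      have hzpow : 0 < z ^ (n + 1) := pow_pos hz0 _
      have hz2 : 0 < z ^ 2 := pow_pos hz0 2
      have h1 : 1 / (4 * z ^ 2) * (M * z ^ (n + 1)) ≤ a * f z := by
        exact mul_le_mul haz hfz (mul_nonneg hMpos.le hzpow.le)
          (le_trans (by positivity) haz)
      have h1' : M / 4 * z ^ (n + 1) / z ^ 2 ≤ a * f z := by
        have heq : M / 4 * z ^ (n + 1) / z ^ 2 = 1 / (4 * z ^ 2) * (M * z ^ (n + 1)) := by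
          field_simp
        rw [heq]; exact h1
      have h2 : -(C * z ^ (n + 1) / z ^ 2) ≤ r z := neg_le_of_abs_le (hr z hz')
      have h3 : M * (↑(n + 1) * z ^ (n + 1 - 1)) ≤ M / 8 * z ^ (n + 1) / z ^ 2 := by
        have hn : (0:ℝ) ≤ (n:ℝ) + 1 := by positivity
        have hz8 : ((n:ℝ) + 1) * z ≤ 1 / 8 := by
          nlinarith [mul_le_mul_of_nonneg_left hz'.2 hn]
        have hzn : z ^ (n + 1 - 1) = z ^ n := rfl
        rw [hzn, le_div_iff₀ hz2]
        have heq : M * (↑(n + 1) * z ^ n) * z ^ 2 = M * ((((n:ℝ) + 1) * z) * z ^ (n + 1)) := by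
          push_cast; ring
        rw [heq]
        calc M * ((((n:ℝ) + 1) * z) * z ^ (n + 1)) ≤ M * (1 / 8 * z ^ (n + 1)) := by
              apply mul_le_mul_of_nonneg_left _ hMpos.le
              exact mul_le_mul_of_nonneg_right hz8 hzpow.le
          _ = M / 8 * z ^ (n + 1) := by ring
      have hfinal : 0 < M / 4 * z ^ (n + 1) / z ^ 2 - C * z ^ (n + 1) / z ^ 2
          - M / 8 * z ^ (n + 1) / z ^ 2 := by
        have : M / 4 * z ^ (n + 1) / z ^ 2 - C * z ^ (n + 1) / z ^ 2
            - M / 8 * z ^ (n + 1) / z ^ 2 = (M / 8 - C) * (z ^ (n + 1) / z ^ 2) := by ring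
        rw [this]
        apply mul_pos (by linarith) (by positivity)
      linarith
    · exact sub_pos.mpr hcon
  simp only [hD] at hDδ
  linarith

private lemma scalar_iden' (n : ℕ) (zz G S S' Rz : ℝ) (h0 : zz ≠ 0) (hG : G ≠ 0) (hS : S ≠ 0)
    (hQ : S - 1 - 3/4 * S^2 * zz - S * S' * zz^2 = zz^(n+1) * Rz) :
    (1/(zz^2 * (G * S)) - 3/(4*zz)) * (G - S) + zz^(n+1) * Rz / (zz^2 * S)
      = ((zz ^ 2)⁻¹ * (1 - G⁻¹) - 3 / 4 * G / zz) - S' := by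
  rw [← hQ]
  field_simp
  ring

open Polynomial in
private lemma poly_factor' (α : ℕ → ℝ) (hα0 : α 0 = 1)
    (hαrec : ∀ k : ℕ, α (k + 1) =
      ((k : ℝ) / 2 + 3 / 4) * ∑ j ∈ range (k + 1), α j * α (k - j))
    (n : ℕ) :
    ∃ R : Polynomial ℝ,
      (∑ i ∈ range (n+1), C (α i) * X ^ i : Polynomial ℝ) - 1
        - (C (3/4 : ℝ) * (∑ i ∈ range (n+1), C (α i) * X ^ i) ^ 2) * X ^ 1
        - ((∑ i ∈ range (n+1), C (α i) * X ^ i)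
            * derivative (∑ i ∈ range (n+1), C (α i) * X ^ i)) * X ^ 2
      = X ^ (n+1) * R := by
  set P : Polynomial ℝ := ∑ i ∈ range (n+1), C (α i) * X ^ i with hP
  have hPc : ∀ k, P.coeff k = if k ≤ n then α k else 0 := by
    intro k
    rw [hP, finset_sum_coeff]
    simp only [coeff_C_mul, coeff_X_pow, mul_ite, mul_one, mul_zero]
    rw [Finset.sum_ite_eq (range (n+1)) k α]
    simp [Nat.lt_succ_iff]
  have key : ∀ m : ℕ, ∑ j ∈ range (m+1), ((m - j : ℕ):ℝ) * (α j * α (m - j))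
      = (m:ℝ)/2 * ∑ j ∈ range (m+1), α j * α (m - j) := by
    intro m
    have h1 : ∑ j ∈ range (m+1), ((j:ℕ):ℝ) * (α (m - j) * α j)
        = ∑ j ∈ range (m+1), ((m - j : ℕ):ℝ) * (α j * α (m - j)) := by
      rw [← Finset.sum_range_reflect (fun j => ((m - j : ℕ):ℝ) * (α j * α (m - j))) (m+1)]
      apply Finset.sum_congr rfl
      intro j hj
      simp only [Finset.mem_range, Nat.lt_succ_iff] at hj
      have h2 : m + 1 - 1 - j = m - j := by omega
      have h3 : m - (m - j) = j := by omega
      simp only [h2, h3]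
    have h4 : ∀ j ∈ range (m+1), ((m - j:ℕ):ℝ) * (α j * α (m-j)) + (j:ℝ) * (α (m-j) * α j)
        = (m:ℝ) * (α j * α (m-j)) := by
      intro j hj
      simp only [Finset.mem_range, Nat.lt_succ_iff] at hj
      have : ((m - j:ℕ):ℝ) = (m:ℝ) - (j:ℝ) := by
        rw [Nat.cast_sub hj]
      rw [this]; ring
    have h5 := Finset.sum_congr rfl h4
    rw [Finset.sum_add_distrib, h1, ← Finset.mul_sum] at h5
    linarith [h5]
  set Q : Polynomial ℝ := P - 1 - (C (3/4 : ℝ) * P ^ 2) * X ^ 1 - (P * derivative P) * X ^ 2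
    with hQ
  have hQc : ∀ k, k < n + 1 → Q.coeff k = 0 := by
    intro k hk
    have hk' : k ≤ n := by omega
    rw [hQ]
    simp only [coeff_sub, coeff_mul_X_pow', coeff_one, coeff_C_mul]
    match k, hk' with
    | 0, _ =>
      simp [hPc, hα0]
    | (m+1), hm =>
      have hmn : m ≤ n := by omega
      have hP2 : (P ^ 2).coeff m = ∑ j ∈ range (m+1), α j * α (m - j) := by
        rw [sq, coeff_mul, Finset.Nat.sum_antidiagonal_eq_sum_range_succ_mk]
        apply Finset.sum_congr rfl
        intro j hj
        simp only [Finset.mem_range, Nat.lt_succ_iff] at hj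
        rw [hPc, hPc, if_pos (by omega), if_pos (by omega)]
      have hB : (if 2 ≤ m + 1 then (P * derivative P).coeff (m + 1 - 2) else 0)
          = ∑ j ∈ range (m+1), ((m - j : ℕ):ℝ) * (α j * α (m - j)) := by
        match m with
        | 0 => simp
        | (l+1) =>
          rw [if_pos (by omega)]
          have h21 : l + 1 + 1 - 2 = l := by omega
          rw [h21, coeff_mul, Finset.Nat.sum_antidiagonal_eq_sum_range_succ_mk]
          rw [Finset.sum_range_succ (fun j => ((l + 1 - j : ℕ):ℝ) * (α j * α (l + 1 - j)))]
          simp only [Nat.sub_self, Nat.cast_zero, zero_mul, add_zero]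
          apply Finset.sum_congr rfl
          intro j hj
          simp only [Finset.mem_range, Nat.lt_succ_iff] at hj
          rw [coeff_derivative, hPc, hPc, if_pos (by omega), if_pos (by omega)]
          have e1 : l - j + 1 = l + 1 - j := by omega
          rw [e1, Nat.cast_sub (show j ≤ l + 1 by omega), Nat.cast_sub hj]
          push_cast
          ring
      rw [hB, key m]
      rw [if_pos (by omega : 1 ≤ m + 1), if_neg (by omega : ¬ (m+1 = 0))]
      have h11 : m + 1 - 1 = m := by omega
      rw [h11, hP2, hPc, if_pos hm, hαrec m]
      ring
  obtain ⟨R, hR⟩ := (Polynomial.X_pow_dvd_iff.mpr hQc : (X:Polynomial ℝ) ^ (n+1) ∣ Q)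
  exact ⟨R, by rw [← hR]⟩

set_option maxHeartbeats 1000000 in
theorem stmt_12 (z₀ g₀ : ℝ) (hz₀ : 0 < z₀) (hg₀ : 0 < g₀)
    (g : ℝ → ℝ) (hinit : g z₀ = g₀)
    (hpos : ∀ z ∈ Ioc (0 : ℝ) z₀, 0 < g z)
    (hsol : ∀ z ∈ Ioc (0 : ℝ) z₀,
      HasDerivAt g ((z ^ 2)⁻¹ * (1 - (g z)⁻¹) - 3 / 4 * g z / z) z)
    (hlim : Tendsto g (nhdsWithin 0 (Ioi 0)) (nhds 1))
    (α : ℕ → ℝ) (hα0 : α 0 = 1)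
    (hαrec : ∀ k : ℕ, α (k + 1) =
      ((k : ℝ) / 2 + 3 / 4) * ∑ j ∈ range (k + 1), α j * α (k - j)) :
    ∀ n : ℕ,
      (fun z : ℝ => g z - ∑ k ∈ range (n + 1), α k * z ^ k)
        =o[nhdsWithin 0 (Ioi 0)] (fun z : ℝ => z ^ n) := by
  intro n
  classical
  obtain ⟨R, hR⟩ := poly_factor' α hα0 hαrec n
  set P : Polynomial ℝ := ∑ i ∈ range (n+1), Polynomial.C (α i) * Polynomial.X ^ i with hP
  have hSsum : ∀ z : ℝ, P.eval z = ∑ k ∈ range (n+1), α k * z ^ k := by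
    intro z
    rw [hP, Polynomial.eval_finset_sum]
    simp
  have hS0 : P.eval 0 = 1 := by
    rw [hSsum]
    rw [Finset.sum_eq_single 0]
    · simp [hα0]
    · intro b _ hb
      simp [zero_pow hb]
    · simp
  clear hP
  clear_value P
  set e : ℝ → ℝ := fun z => g z - P.eval z with he
  -- eventual bounds
  have hball : ∀ᶠ y in nhds (1:ℝ), |y - 1| ≤ 1/4 := by
    filter_upwards [Metric.closedBall_mem_nhds (1:ℝ) (by norm_num : (0:ℝ) < 1/4)] with y hy
    simpa [Real.dist_eq] using hy
  have hev1 : ∀ᶠ z in nhdsWithin (0:ℝ) (Ioi 0), |g z - 1| ≤ 1/4 := hlim.eventually hball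
  have hSc : ContinuousAt (fun z => P.eval z) 0 := P.continuous_aeval.continuousAt
  have hev2 : ∀ᶠ z in nhds (0:ℝ), |P.eval z - 1| ≤ 1/4 := by
    have := hSc.tendsto
    rw [hS0] at this
    exact this.eventually hball
  set C₀ : ℝ := |R.eval 0| + 1 with hC₀
  have hC₀1 : 1 ≤ C₀ := by rw [hC₀]; linarith [abs_nonneg (R.eval 0)]
  have hev3 : ∀ᶠ z in nhds (0:ℝ), |R.eval z| ≤ C₀ := by
    have hRc : ContinuousAt (fun z => R.eval z) 0 := R.continuous_aeval.continuousAt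
    have : ∀ᶠ y in nhds (R.eval 0), |y| ≤ C₀ := by
      filter_upwards [Metric.closedBall_mem_nhds (R.eval 0) (by norm_num : (0:ℝ) < 1)] with y hy
      rw [Metric.mem_closedBall, Real.dist_eq] at hy
      calc |y| ≤ |y - R.eval 0| + |R.eval 0| := by
            have := abs_sub_abs_le_abs_sub y (R.eval 0); linarith [abs_sub_abs_le_abs_sub y (R.eval 0)]
        _ ≤ C₀ := by rw [hC₀]; linarith
    exact hRc.tendsto.eventually this
  have hall : ∀ᶠ z in nhdsWithin (0:ℝ) (Ioi 0),
      |g z - 1| ≤ 1/4 ∧ |P.eval z - 1| ≤ 1/4 ∧ |R.eval z| ≤ C₀ :=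
    hev1.and (((hev2.and hev3)).filter_mono nhdsWithin_le_nhds)
  obtain ⟨u, hu, hsub⟩ := mem_nhdsGT_iff_exists_Ioc_subset.mp hall
  rw [Set.mem_Ioi] at hu
  set δ : ℝ := min u (min z₀ (min (1/3) (1/(8*((n:ℝ)+1))))) with hδ
  have hδpos : 0 < δ := by
    apply lt_min hu
    apply lt_min hz₀
    apply lt_min (by norm_num)
    positivity
  have hδu : δ ≤ u := min_le_left _ _
  have hδz₀ : δ ≤ z₀ := le_trans (min_le_right _ _) (min_le_left _ _)
  have hδ3 : δ ≤ 1/3 := le_trans (min_le_right _ _) (le_trans (min_le_right _ _) (min_le_left _ _))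
  have hδn : δ * ((n:ℝ) + 1) ≤ 1/8 := by
    have h8 : δ ≤ 1/(8*((n:ℝ)+1)) :=
      le_trans (min_le_right _ _) (le_trans (min_le_right _ _) (min_le_right _ _))
    have hn1 : (0:ℝ) < (n:ℝ) + 1 := by positivity
    calc δ * ((n:ℝ)+1) ≤ 1/(8*((n:ℝ)+1)) * ((n:ℝ)+1) := by
          exact mul_le_mul_of_nonneg_right h8 hn1.le
      _ = 1/8 := by field_simp
  -- basic bounds on (0, δ]
  have hbnd : ∀ z ∈ Ioc (0:ℝ) δ,
      |g z - 1| ≤ 1/4 ∧ |P.eval z - 1| ≤ 1/4 ∧ |R.eval z| ≤ C₀ := by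
    intro z hz
    exact hsub ⟨hz.1, le_trans hz.2 hδu⟩
  set r : ℝ → ℝ := fun z => z^(n+1) * R.eval z / (z^2 * P.eval z) with hrdef
  -- the derivative structure
  have hf : ∀ z ∈ Ioc (0:ℝ) δ, ∃ a : ℝ, 1 / (4 * z ^ 2) ≤ a ∧
      HasDerivAt e (a * e z + r z) z := by
    intro z hz
    obtain ⟨hg1, hS1, hR1⟩ := hbnd z hz
    have hz0 : 0 < z := hz.1
    have hzδ : z ≤ δ := hz.2
    have hgl : 3/4 ≤ g z := by have := abs_le.mp hg1; linarith [this.1]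
    have hgu : g z ≤ 5/4 := by have := abs_le.mp hg1; linarith [this.2]
    have hSl : 3/4 ≤ P.eval z := by have := abs_le.mp hS1; linarith [this.1]
    have hSu : P.eval z ≤ 5/4 := by have := abs_le.mp hS1; linarith [this.2]
    have hgz : g z ≠ 0 := by linarith
    have hSz : P.eval z ≠ 0 := by linarith
    have hzne : z ≠ 0 := ne_of_gt hz0
    refine ⟨1/(z^2 * (g z * P.eval z)) - 3/(4*z), ?_, ?_⟩
    · -- lower bound on a
      have hz2 : (0:ℝ) < z^2 := by positivity
      have hgS : g z * P.eval z ≤ 2 := by nlinarith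
      have hgSpos : 0 < g z * P.eval z := by nlinarith
      have h1 : 1/(2*z^2) ≤ 1/(z^2 * (g z * P.eval z)) := by
        apply one_div_le_one_div_of_le
        · positivity
        · nlinarith
      have h2 : (1/(2*z^2) - 3/(4*z)) - 1/(4*z^2) = (1 - 3*z)/(4*z^2) := by
        field_simp; ring
      have h3 : 0 ≤ (1 - 3*z)/(4*z^2) := by
        apply div_nonneg _ (by positivity)
        have : z ≤ 1/3 := le_trans hzδ hδ3
        linarith
      linarith
    · -- derivative
      have hd := (hsol z ⟨hz0, le_trans hzδ hδz₀⟩).sub (P.hasDerivAt z)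
      have hQe := congrArg (Polynomial.eval z) hR
      simp only [Polynomial.eval_sub, Polynomial.eval_mul, Polynomial.eval_pow,
        Polynomial.eval_one, Polynomial.eval_C, Polynomial.eval_X, pow_one] at hQe
      have key2 := scalar_iden' n z (g z) (Polynomial.eval z P)
        (Polynomial.eval z (Polynomial.derivative P)) (Polynomial.eval z R)
        hzne hgz hSz (by linear_combination hQe)
      simp only [he, hrdef]
      rw [key2]
      exact hd
  -- bound on r
  have hC2 : (0:ℝ) ≤ 2*C₀ := by linarith
  have hrb : ∀ z ∈ Ioc (0:ℝ) δ, |r z| ≤ (2*C₀) * z ^ (n + 1) / z ^ 2 := by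
    intro z hz
    obtain ⟨hg1, hS1, hR1⟩ := hbnd z hz
    have hz0 : 0 < z := hz.1
    have hSl : 3/4 ≤ P.eval z := by have := abs_le.mp hS1; linarith [(abs_le.mp hS1).1]
    have hzpow : 0 < z ^ (n+1) := pow_pos hz0 _
    have hz2 : (0:ℝ) < z^2 := by positivity
    rw [hrdef]
    simp only []
    rw [abs_div, abs_mul]
    rw [abs_of_pos hzpow, abs_of_pos (by nlinarith : (0:ℝ) < z^2 * P.eval z)]
    rw [div_le_div_iff₀ (by nlinarith) hz2]
    have h1 : |Polynomial.eval z R| ≤ 2*C₀*(P.eval z) := by nlinarith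
    have h2 : (0:ℝ) ≤ z^(n+1) * z^2 := by positivity
    nlinarith [mul_le_mul_of_nonneg_left h1 h2]
  have hMden : (0:ℝ) < δ ^ (n+1) := pow_pos hδpos _
  set M : ℝ := max (8*(2*C₀) + 1) ((|e δ| + 1)/δ^(n+1)) with hM
  have hM1 : 8*(2*C₀)+1 ≤ M := le_max_left _ _
  have hMe : |e δ| + 1 ≤ M * δ^(n+1) := by
    have h := le_max_right (8*(2*C₀) + 1) ((|e δ| + 1)/δ^(n+1))
    rw [div_le_iff₀ hMden] at h
    rw [← hM] at h
    exact h
  have hup := barrier' δ (2*C₀) M n e r hC2 hδn hf hrb hM1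
    (by linarith [le_abs_self (e δ)])
  have hf' : ∀ z ∈ Ioc (0:ℝ) δ, ∃ a : ℝ, 1/(4*z^2) ≤ a ∧
      HasDerivAt (fun z => -e z) (a * (-e z) + (-r z)) z := by
    intro z hz
    obtain ⟨a, ha, hd⟩ := hf z hz
    refine ⟨a, ha, ?_⟩
    have := hd.neg
    rw [show a * (-e z) + (-r z) = -(a * e z + r z) by ring]
    exact this
  have hrb' : ∀ z ∈ Ioc (0:ℝ) δ, |(-r z)| ≤ (2*C₀) * z ^ (n + 1) / z ^ 2 := by
    intro z hz
    rw [abs_neg]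
    exact hrb z hz
  have hdn := barrier' δ (2*C₀) M n (fun z => -e z) (fun z => -r z) hC2 hδn hf' hrb' hM1
    (by show -e δ + 1 ≤ M * δ ^ (n + 1); linarith [neg_abs_le (e δ)])
  have hMpos : 0 < M := lt_of_lt_of_le (by linarith) hM1
  rw [Asymptotics.isLittleO_iff]
  intro c hc
  have hmem : Ioc (0:ℝ) (min δ (c/M)) ∈ nhdsWithin (0:ℝ) (Ioi 0) :=
    Ioc_mem_nhdsGT_of_mem ⟨le_rfl, lt_min hδpos (div_pos hc hMpos)⟩
  filter_upwards [hmem] with z hz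
  have hz0 : 0 < z := hz.1
  have hzδ : z ≤ δ := le_trans hz.2 (min_le_left _ _)
  have hzc : z ≤ c/M := le_trans hz.2 (min_le_right _ _)
  have h1 := hup z ⟨hz0, hzδ⟩
  have h2 : -e z ≤ M * z^(n+1) := hdn z ⟨hz0, hzδ⟩
  have habs : |e z| ≤ M * z^(n+1) := abs_le.mpr ⟨by linarith, h1⟩
  rw [Real.norm_eq_abs, Real.norm_eq_abs]
  have hgoal : g z - ∑ k ∈ range (n+1), α k * z^k = e z := by
    rw [he]
    simp only []
    rw [hSsum z]
  rw [hgoal]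
  have hMzc : M * z ≤ c := by
    have := (le_div_iff₀ hMpos).mp hzc
    linarith
  have hstep : M * z^(n+1) ≤ c * z^n := by
    calc M * z^(n+1) = (M*z)*z^n := by ring
      _ ≤ c * z^n := mul_le_mul_of_nonneg_right hMzc (pow_nonneg hz0.le n)
  calc |e z| ≤ M * z^(n+1) := habs
    _ ≤ c * z^n := hstep
    _ = c * |z^n| := by rw [abs_of_pos (pow_pos hz0 n)]
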